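/- Let U be a d×d complex unitary matrix (d ≥ 1). Define its l1 cohering power c₁ = max over columns j of ((∑_i |U_{ij}|)² − 1) and its relative-entropy cohering power c_r = max over columns j of (−∑_i |U_{ij}|² log₂ |U_{ij}|²). Then c₁ ≥ c_r and c₁ ≥ 2^{c_r} − 1; that is, c₁ ≥ max{c_r, 2^{c_r} − 1}. -/

import Mathlib

open Matrix BigOperators ComplexOrder

/-- The l1-coherence of a matrix: the sum of the absolute values of its
off-diagonal entries. -/
noncomputable def Cl1 {n : ℕ} (A : Matrix (Fin n) (Fin n) ℂ) : ℝ :=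
  ∑ i, ∑ j, if i ≠ j then ‖A i j‖ else 0

/-- A density matrix: positive semidefinite with trace 1. -/
def IsDensity {n : ℕ} (ρ : Matrix (Fin n) (Fin n) ℂ) : Prop :=
  ρ.PosSemidef ∧ ρ.trace = 1

/-- A quantum operation (CPTP map) given by a finite family of Kraus operators. -/
def IsQuantumOp {n : ℕ} (Φ : Matrix (Fin n) (Fin n) ℂ → Matrix (Fin n) (Fin n) ℂ) : Prop :=
  ∃ (m : ℕ) (K : Fin m → Matrix (Fin n) (Fin n) ℂ),
    (∑ i, (K i)ᴴ * K i) = 1 ∧ ∀ ρ, Φ ρ = ∑ i, K i * ρ * (K i)ᴴ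

/-- The dephasing map `Δ`, keeping only the diagonal part of a matrix. -/
def Deph {n : ℕ} (A : Matrix (Fin n) (Fin n) ℂ) : Matrix (Fin n) (Fin n) ℂ :=
  Matrix.of fun i j => if i = j then A i j else 0

namespace CohAux

open Real Set

noncomputable def PP (u : ℝ) : ℝ :=
  (1+u)*Real.log (1+u) + (1-u)*Real.log (1-u) - 2*Real.log 2*(1 - Real.sqrt (1-u^2))

noncomputable def HH (u : ℝ) : ℝ :=
  Real.sqrt (1-u^2)*(Real.log (1+u) - Real.log (1-u)) - 2*Real.log 2*u

noncomputable def KK (u : ℝ) : ℝ :=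
  2 - u*(Real.log (1+u) - Real.log (1-u)) - 2*Real.log 2*Real.sqrt (1-u^2)

variable {u : ℝ}

lemma sq_pos (h1 : -1 < u) (h2 : u < 1) : 0 < 1 - u^2 := by nlinarith

lemma sqrt_pos' (h1 : -1 < u) (h2 : u < 1) : 0 < Real.sqrt (1-u^2) :=
  Real.sqrt_pos.2 (sq_pos h1 h2)

lemma hasDerivAt_sqrt_one_sub_sq (h1 : -1 < u) (h2 : u < 1) :
    HasDerivAt (fun u => Real.sqrt (1-u^2)) (-u / Real.sqrt (1-u^2)) u := by
  have hne : (1 - u^2) ≠ 0 := (sq_pos h1 h2).ne'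
  have hin : HasDerivAt (fun u : ℝ => 1 - u^2) (-(2*u)) u := by
    simpa using ((hasDerivAt_pow 2 u).const_sub 1)
  have := (Real.hasDerivAt_sqrt hne).comp u hin
  refine this.congr_deriv ?_
  field_simp

lemma hasDerivAt_log_one_add (h1 : -1 < u) :
    HasDerivAt (fun u => Real.log (1+u)) (1/(1+u)) u := by
  have hin : HasDerivAt (fun u : ℝ => 1 + u) 1 u := by
    simpa using (hasDerivAt_id u).const_add (1:ℝ)
  have := (Real.hasDerivAt_log (by linarith : (1:ℝ)+u ≠ 0)).comp u hin
  refine this.congr_deriv ?_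
  simp

lemma hasDerivAt_log_one_sub (h2 : u < 1) :
    HasDerivAt (fun u => Real.log (1-u)) (-(1/(1-u))) u := by
  have hin : HasDerivAt (fun u : ℝ => 1 - u) (-1) u := by
    simpa using (hasDerivAt_id u).const_sub (1:ℝ)
  have := (Real.hasDerivAt_log (by linarith : (1:ℝ)-u ≠ 0)).comp u hin
  refine this.congr_deriv ?_
  field_simp

lemma hasDerivAt_PP (h1 : -1 < u) (h2 : u < 1) :
    HasDerivAt PP (HH u / Real.sqrt (1-u^2)) u := by
  have hu1 : (1:ℝ)+u ≠ 0 := by linarith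
  have hu2 : (1:ℝ)-u ≠ 0 := by linarith
  have hs : Real.sqrt (1-u^2) ≠ 0 := (sqrt_pos' h1 h2).ne'
  have ha : HasDerivAt (fun u : ℝ => (1+u)*Real.log (1+u)) (Real.log (1+u) + 1) u := by
    have := (((hasDerivAt_id u).const_add (1:ℝ)).mul (hasDerivAt_log_one_add h1))
    refine this.congr_deriv ?_
    field_simp
    simp only [id]
    ring
  have hb : HasDerivAt (fun u : ℝ => (1-u)*Real.log (1-u)) (-Real.log (1-u) - 1) u := by
    have := (((hasDerivAt_id u).const_sub (1:ℝ)).mul (hasDerivAt_log_one_sub h2))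
    refine this.congr_deriv ?_
    field_simp
    simp only [id]
    ring
  have hc : HasDerivAt (fun u : ℝ => 2*Real.log 2*(1 - Real.sqrt (1-u^2)))
      (2*Real.log 2*(u / Real.sqrt (1-u^2))) u := by
    have := ((hasDerivAt_sqrt_one_sub_sq h1 h2).const_sub (1:ℝ)).const_mul (2*Real.log 2)
    refine this.congr_deriv ?_
    field_simp
  have := (ha.add hb).sub hc
  refine this.congr_deriv ?_
  unfold HH
  field_simp
  ring


lemma hasDerivAt_L (h1 : -1 < u) (h2 : u < 1) :
    HasDerivAt (fun u => Real.log (1+u) - Real.log (1-u)) (1/(1+u) + 1/(1-u)) u := by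
  have := (hasDerivAt_log_one_add h1).sub (hasDerivAt_log_one_sub h2)
  refine this.congr_deriv ?_
  ring

lemma hasDerivAt_HH (h1 : -1 < u) (h2 : u < 1) :
    HasDerivAt HH (KK u / Real.sqrt (1-u^2)) u := by
  have hu1 : (1:ℝ)+u ≠ 0 := by linarith
  have hu2 : (1:ℝ)-u ≠ 0 := by linarith
  have hs : Real.sqrt (1-u^2) ≠ 0 := (sqrt_pos' h1 h2).ne'
  have hss : Real.sqrt (1-u^2) * Real.sqrt (1-u^2) = 1-u^2 := Real.mul_self_sqrt (sq_pos h1 h2).le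
  have hmul := (hasDerivAt_sqrt_one_sub_sq h1 h2).mul (hasDerivAt_L h1 h2)
  have hlin : HasDerivAt (fun u : ℝ => 2*Real.log 2*u) (2*Real.log 2) u := by
    simpa using (hasDerivAt_id u).const_mul (2*Real.log 2)
  have key : Real.sqrt (1-u^2) * (1/(1+u) + 1/(1-u)) = 2 / Real.sqrt (1-u^2) := by
    rw [eq_div_iff hs, mul_right_comm, hss]
    field_simp
    ring
  have := hmul.sub hlin
  refine this.congr_deriv ?_
  rw [key]
  unfold KK
  field_simp
  ring

lemma hasDerivAt_KK (h1 : -1 < u) (h2 : u < 1) :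
    HasDerivAt KK (-(Real.log (1+u) - Real.log (1-u)) - u*(1/(1+u)+1/(1-u))
      + 2*Real.log 2*(u/Real.sqrt (1-u^2))) u := by
  have ha : HasDerivAt (fun u : ℝ => u*(Real.log (1+u) - Real.log (1-u)))
      ((Real.log (1+u) - Real.log (1-u)) + u*(1/(1+u)+1/(1-u))) u := by
    have := (hasDerivAt_id u).mul (hasDerivAt_L h1 h2)
    refine this.congr_deriv ?_
    simp [id]
  have hb : HasDerivAt (fun u : ℝ => 2*Real.log 2*Real.sqrt (1-u^2))
      (2*Real.log 2*(-u/Real.sqrt (1-u^2))) u := by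
    exact (hasDerivAt_sqrt_one_sub_sq h1 h2).const_mul _
  have := (ha.add hb).const_sub 2
  have e : KK = fun u : ℝ => 2 - (u*(Real.log (1+u) - Real.log (1-u))
      + 2*Real.log 2*Real.sqrt (1-u^2)) := by
    funext x
    unfold KK
    ring
  rw [e]
  refine this.congr_deriv ?_
  ring

lemma KK_deriv_nonpos (h0 : 0 ≤ u) (h2 : u < 1) :
    -(Real.log (1+u) - Real.log (1-u)) - u*(1/(1+u)+1/(1-u))
      + 2*Real.log 2*(u/Real.sqrt (1-u^2)) ≤ 0 := by
  have h1 : (-1:ℝ) < u := by linarith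
  have hx : 0 < 1 - u^2 := sq_pos h1 h2
  have hL : 0 ≤ Real.log (1+u) - Real.log (1-u) := by
    have := Real.log_le_log (by linarith) (by linarith : (1:ℝ)-u ≤ 1+u)
    linarith
  have hsx : 1 - u^2 ≤ Real.sqrt (1-u^2) := by
    nlinarith [Real.sq_sqrt hx.le, Real.sqrt_nonneg (1-u^2), sq_nonneg (Real.sqrt (1-u^2) - 1)]
  have hsp : 0 < Real.sqrt (1-u^2) := sqrt_pos' h1 h2
  have hdiv : u / Real.sqrt (1-u^2) ≤ u / (1-u^2) :=
    div_le_div_of_nonneg_left h0 hx hsx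
  have hlog2 : Real.log 2 ≤ 1 := by
    have := Real.log_le_sub_one_of_pos (by norm_num : (0:ℝ) < 2)
    linarith
  have hlog2' : 0 < Real.log 2 := Real.log_pos one_lt_two
  have key : 2*Real.log 2*(u/Real.sqrt (1-u^2)) ≤ u*(1/(1+u)+1/(1-u)) := by
    have e : u*(1/(1+u)+1/(1-u)) = 2*(u/(1-u^2)) := by
      have hu1 : (1:ℝ)+u ≠ 0 := by linarith
      have hu2 : (1:ℝ)-u ≠ 0 := by linarith
      field_simp
      ring
    rw [e]
    have h2' : 2*Real.log 2*(u/Real.sqrt (1-u^2)) ≤ 2*1*(u/(1-u^2)) := by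
      apply mul_le_mul
      · linarith
      · exact hdiv
      · positivity
      · norm_num
    linarith
  linarith

lemma continuous_PP : Continuous PP := by
  unfold PP
  have hca : Continuous fun u:ℝ => 1 + u := by continuity
  have hcb : Continuous fun u:ℝ => 1 - u := by continuity
  have h1 : Continuous fun u:ℝ => (1+u)*Real.log (1+u) := by
    have := Real.continuous_mul_log.comp hca
    exact this
  have h2 : Continuous fun u:ℝ => (1-u)*Real.log (1-u) := by
    have := Real.continuous_mul_log.comp hcb
    exact this
  have h3 : Continuous fun u:ℝ => Real.sqrt (1-u^2) :=
    (continuous_const.sub (continuous_pow 2)).sqrt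
  exact (h1.add h2).sub (continuous_const.mul (continuous_const.sub h3))

lemma PP_zero : PP 0 = 0 := by norm_num [PP]

lemma PP_one : PP 1 = 0 := by norm_num [PP]

lemma HH_zero : HH 0 = 0 := by norm_num [HH]

lemma KK_anti : AntitoneOn KK (Ico (0:ℝ) 1) := by
  apply antitoneOn_of_deriv_nonpos (convex_Ico _ _)
  · intro x hx
    exact ((hasDerivAt_KK (by linarith [hx.1]) hx.2).continuousAt).continuousWithinAt
  · rw [interior_Ico]
    intro x hx
    exact ((hasDerivAt_KK (by linarith [hx.1]) hx.2).differentiableAt).differentiableWithinAt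
  · rw [interior_Ico]
    intro x hx
    rw [(hasDerivAt_KK (by linarith [hx.1]) hx.2).deriv]
    exact KK_deriv_nonpos hx.1.le hx.2

lemma PP_nonneg {w : ℝ} (hw0 : 0 ≤ w) (hw1 : w < 1) : 0 ≤ PP w := by
  by_cases hcase : ∀ v ∈ Icc (0:ℝ) w, 0 ≤ HH v
  · have mono : MonotoneOn PP (Icc 0 w) := by
      apply monotoneOn_of_deriv_nonneg (convex_Icc _ _) continuous_PP.continuousOn
      · rw [interior_Icc]
        intro x hx
        exact ((hasDerivAt_PP (by linarith [hx.1]) (by linarith [hx.2])).differentiableAt).differentiableWithinAt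
      · rw [interior_Icc]
        intro x hx
        rw [(hasDerivAt_PP (by linarith [hx.1]) (by linarith [hx.2])).deriv]
        exact div_nonneg (hcase x ⟨hx.1.le, hx.2.le⟩) (Real.sqrt_nonneg _)
    have := mono (left_mem_Icc.2 hw0) (right_mem_Icc.2 hw0) hw0
    rwa [PP_zero] at this
  · push_neg at hcase
    obtain ⟨v, hv, hHv⟩ := hcase
    have hv1 : v < 1 := lt_of_le_of_lt hv.2 hw1
    have hKv : KK v < 0 := by
      by_contra hKv
      push_neg at hKv
      have mono : MonotoneOn HH (Icc 0 v) := by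
        apply monotoneOn_of_deriv_nonneg (convex_Icc _ _)
        · intro x hx
          exact ((hasDerivAt_HH (by linarith [hx.1]) (by linarith [hx.2, hv1])).continuousAt).continuousWithinAt
        · rw [interior_Icc]
          intro x hx
          exact ((hasDerivAt_HH (by linarith [hx.1]) (by linarith [hx.2])).differentiableAt).differentiableWithinAt
        · rw [interior_Icc]
          intro x hx
          rw [(hasDerivAt_HH (by linarith [hx.1]) (by linarith [hx.2])).deriv]
          apply div_nonneg _ (Real.sqrt_nonneg _)
          exact le_trans hKv (KK_anti ⟨hx.1.le, by linarith [hx.2]⟩ ⟨hv.1, hv1⟩ hx.2.le)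
      have := mono (left_mem_Icc.2 hv.1) (right_mem_Icc.2 hv.1) hv.1
      rw [HH_zero] at this
      linarith
    have hHneg : ∀ z ∈ Ioo w 1, HH z ≤ 0 := by
      intro z hz
      have hvz : v ≤ z := le_trans hv.2 hz.1.le
      have anti : AntitoneOn HH (Ico v 1) := by
        apply antitoneOn_of_deriv_nonpos (convex_Ico _ _)
        · intro x hx
          exact ((hasDerivAt_HH (by linarith [hx.1, hv.1]) hx.2).continuousAt).continuousWithinAt
        · rw [interior_Ico]
          intro x hx
          exact ((hasDerivAt_HH (by linarith [hx.1, hv.1]) hx.2).differentiableAt).differentiableWithinAt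
        · rw [interior_Ico]
          intro x hx
          rw [(hasDerivAt_HH (by linarith [hx.1, hv.1]) hx.2).deriv]
          apply div_nonpos_of_nonpos_of_nonneg _ (Real.sqrt_nonneg _)
          have := KK_anti ⟨hv.1, hv1⟩ ⟨by linarith [hx.1, hv.1], hx.2⟩ hx.1.le
          linarith
      have := anti (left_mem_Ico.2 hv1) ⟨hvz, hz.2⟩ hvz
      linarith
    have anti2 : AntitoneOn PP (Icc w 1) := by
      apply antitoneOn_of_deriv_nonpos (convex_Icc _ _) continuous_PP.continuousOn
      · rw [interior_Icc]
        intro x hx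
        exact ((hasDerivAt_PP (by linarith [hx.1]) hx.2).differentiableAt).differentiableWithinAt
      · rw [interior_Icc]
        intro x hx
        rw [(hasDerivAt_PP (by linarith [hx.1]) hx.2).deriv]
        exact div_nonpos_of_nonpos_of_nonneg (hHneg x hx) (Real.sqrt_nonneg _)
    have := anti2 (left_mem_Icc.2 hw1.le) (right_mem_Icc.2 hw1.le) hw1.le
    rwa [PP_one] at this


lemma binEnt_le_half {t : ℝ} (h0 : 0 < t) (h1 : t ≤ 1/2) :
    -(t*Real.log t) - (1-t)*Real.log (1-t) ≤ 2*Real.log 2*Real.sqrt (t*(1-t)) := by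
  have h1' : t < 1 := by linarith
  have hu0 : (0:ℝ) ≤ 1 - 2*t := by linarith
  have hu1 : 1 - 2*t < 1 := by linarith
  have hP := PP_nonneg hu0 hu1
  unfold PP at hP
  rw [show 1 + (1-2*t) = 2*(1-t) from by ring, show 1 - (1-2*t) = 2*t from by ring,
      show 1 - (1-2*t)^2 = 4*(t*(1-t)) from by ring] at hP
  have l1 : Real.log (2*(1-t)) = Real.log 2 + Real.log (1-t) :=
    Real.log_mul (by norm_num) (by linarith)
  have l2 : Real.log (2*t) = Real.log 2 + Real.log t :=
    Real.log_mul (by norm_num) (ne_of_gt h0)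
  have l3 : Real.sqrt (4*(t*(1-t))) = 2*Real.sqrt (t*(1-t)) := by
    rw [show (4:ℝ)*(t*(1-t)) = 2^2*(t*(1-t)) from by ring,
      Real.sqrt_mul (by positivity), Real.sqrt_sq (by norm_num)]
  rw [l1, l2, l3] at hP
  nlinarith [hP]

lemma binEnt_le {t : ℝ} (h0 : 0 < t) (h1 : t < 1) :
    -(t*Real.log t) - (1-t)*Real.log (1-t) ≤ 2*Real.log 2*Real.sqrt (t*(1-t)) := by
  rcases le_or_gt t (1/2) with h|h
  · exact binEnt_le_half h0 h
  · have key := binEnt_le_half (t := 1-t) (by linarith) (by linarith)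
    rw [show (1:ℝ)-(1-t) = t from by ring, mul_comm (1-t) t] at key
    linarith

lemma pair_ineq {p q : ℝ} (hp : 0 < p) (hq : 0 < q) :
    p*Real.log ((p+q)/p) + q*Real.log ((p+q)/q) ≤ 2*Real.log 2*Real.sqrt (p*q) := by
  have hσ : 0 < p + q := by linarith
  set t := p/(p+q) with ht
  have h0 : 0 < t := div_pos hp hσ
  have h1 : t < 1 := (div_lt_one hσ).2 (by linarith)
  have h1t : 1 - t = q/(p+q) := by
    rw [ht]
    field_simp
    ring
  have key := binEnt_le h0 h1
  have lp : Real.log ((p+q)/p) = -Real.log t := by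
    rw [ht, ← Real.log_inv]
    congr 1
    field_simp
  have lq : Real.log ((p+q)/q) = -Real.log (1-t) := by
    rw [h1t, ← Real.log_inv]
    congr 1
    field_simp
  have lsq : Real.sqrt (t*(1-t)) = Real.sqrt (p*q)/(p+q) := by
    have e : t*(1-t) = (p*q)/((p+q)^2) := by
      rw [ht, h1t, div_mul_div_comm]
      congr 1
      ring
    rw [e, Real.sqrt_div (by positivity), Real.sqrt_sq hσ.le]
  have hmul := mul_le_mul_of_nonneg_left key hσ.le
  have e1 : t*(p+q) = p := by rw [ht]; field_simp
  have e2 : (1-t)*(p+q) = q := by rw [h1t]; field_simp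
  rw [lp, lq]
  calc p*(-Real.log t) + q*(-Real.log (1-t))
      = (p+q)*(-(t*Real.log t) - (1-t)*Real.log (1-t)) := by
        rw [show (p+q)*(-(t*Real.log t) - (1-t)*Real.log (1-t))
          = -(t*(p+q))*Real.log t - ((1-t)*(p+q))*Real.log (1-t) from by ring, e1, e2]
        ring
    _ ≤ (p+q)*(2*Real.log 2*Real.sqrt (t*(1-t))) := hmul
    _ = 2*Real.log 2*Real.sqrt (p*q) := by
        rw [lsq]
        field_simp

lemma prod_one_add_ge {ι : Type*} (x : ι → ℝ) (hx : ∀ i, 0 ≤ x i) (S : Finset ι) :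
    1 + ∑ i ∈ S, x i ≤ ∏ i ∈ S, (1 + x i) := by
  classical
  induction S using Finset.cons_induction with
  | empty => simp
  | cons a s ha ih =>
    rw [Finset.prod_cons, Finset.sum_cons]
    have h1 : 0 ≤ x a := hx a
    have h2 : 0 ≤ ∑ i ∈ s, x i := Finset.sum_nonneg fun i _ => hx i
    have h3 : (1:ℝ) ≤ ∏ i ∈ s, (1 + x i) := le_trans (by linarith) ih
    nlinarith [ih]

lemma log_le_sum_log {ι : Type*} (S : Finset ι) (aa : ℝ) (ha : 0 < aa)
    (p : ι → ℝ) (hp : ∀ i, 0 ≤ p i) :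
    Real.log ((aa + ∑ i ∈ S, p i)/aa) ≤ ∑ i ∈ S, Real.log ((aa + p i)/aa) := by
  have e : ∀ i, (aa + p i)/aa = 1 + p i/aa := fun i => by field_simp
  have eS : (aa + ∑ i ∈ S, p i)/aa = 1 + (∑ i ∈ S, p i/aa) := by
    rw [← Finset.sum_div]
    field_simp
  rw [eS]
  have hnn : ∀ i, 0 ≤ p i / aa := fun i => div_nonneg (hp i) ha.le
  have hsum : 0 ≤ ∑ i ∈ S, p i / aa := Finset.sum_nonneg fun i _ => hnn i
  calc Real.log (1 + ∑ i ∈ S, p i / aa)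
      ≤ Real.log (∏ i ∈ S, (1 + p i/aa)) := by
        apply Real.log_le_log (by linarith)
        exact prod_one_add_ge _ hnn S
    _ = ∑ i ∈ S, Real.log (1 + p i/aa) :=
        Real.log_prod (fun i _ => by nlinarith [hnn i])
    _ = ∑ i ∈ S, Real.log ((aa + p i)/aa) := by
        refine Finset.sum_congr rfl fun i _ => ?_
        rw [e i]


lemma sqrt_term {x y : ℝ} (hx : 0 ≤ x) (hy : 0 ≤ y) :
    Real.sqrt (x^2 * y^2) = x * y := by
  rw [show x^2*y^2 = (x*y)^2 from by ring, Real.sqrt_sq (mul_nonneg hx hy)]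

lemma entropy_le_l1 {d : ℕ} (a : Fin d → ℝ) (ha : ∀ i, 0 ≤ a i)
    (hs : ∑ i, a i ^ 2 = 1) :
    ∑ i, -(a i ^ 2 * Real.log (a i ^ 2)) ≤ Real.log 2 * ((∑ i, a i)^2 - 1) := by
  classical
  set T : Finset (Fin d) := Finset.univ.filter (fun i => a i ≠ 0) with hT
  have hmemT : ∀ i, i ∈ T ↔ a i ≠ 0 := by
    intro i
    simp [hT]
  have hrestrict : ∑ i, -(a i ^2 * Real.log (a i ^2))
      = ∑ i ∈ T, -(a i ^2 * Real.log (a i ^2)) := by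
    symm
    apply Finset.sum_subset (Finset.filter_subset _ _)
    intro i _ hi
    have : a i = 0 := by
      by_contra hne
      exact hi ((hmemT i).2 hne)
    simp [this]
  have hTsum : ∑ i ∈ T, a i ^2 = 1 := by
    rw [← hs]
    apply Finset.sum_subset (Finset.filter_subset _ _)
    intro i _ hi
    have : a i = 0 := by
      by_contra hne
      exact hi ((hmemT i).2 hne)
    simp [this]
  have hppos : ∀ i ∈ T, 0 < a i ^2 := by
    intro i hi
    have := (hmemT i).1 hi
    positivity
  have stepA : ∀ i ∈ T, -(a i ^2 * Real.log (a i ^2))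
      ≤ ∑ k ∈ T.erase i, a i ^2 * Real.log ((a i ^2 + a k ^2)/(a i ^2)) := by
    intro i hi
    have hpi := hppos i hi
    have h1 : a i ^2 + ∑ k ∈ T.erase i, a k ^2 = 1 := by
      rw [← hTsum]
      exact Finset.add_sum_erase T (fun k => a k ^2) hi
    have h2 := log_le_sum_log (T.erase i) (a i ^2) hpi (fun k => a k ^2)
      (fun k => sq_nonneg _)
    rw [h1, one_div, Real.log_inv] at h2
    calc -(a i ^2 * Real.log (a i ^2)) = a i ^2 * (-Real.log (a i ^2)) := by ring
      _ ≤ a i ^2 * ∑ k ∈ T.erase i, Real.log ((a i ^2 + a k ^2)/(a i ^2)) :=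
          mul_le_mul_of_nonneg_left h2 hpi.le
      _ = ∑ k ∈ T.erase i, a i ^2 * Real.log ((a i ^2 + a k ^2)/(a i ^2)) :=
          Finset.mul_sum _ _ _
  have main1 : ∑ i ∈ T, -(a i ^2 * Real.log (a i ^2)) ≤
      ∑ i ∈ T, ∑ k ∈ T.erase i, a i ^2 * Real.log ((a i ^2 + a k ^2)/(a i ^2)) :=
    Finset.sum_le_sum stepA
  have hmem : ∀ (x y : Fin d), x ∈ T ∧ y ∈ T.erase x ↔ x ∈ T.erase y ∧ y ∈ T := by
    intro x y
    simp only [Finset.mem_erase]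
    constructor
    · rintro ⟨hx, hyx, hy⟩
      exact ⟨⟨Ne.symm hyx, hx⟩, hy⟩
    · rintro ⟨⟨hxy, hx⟩, hy⟩
      exact ⟨hx, Ne.symm hxy, hy⟩
  have hswap : ∑ i ∈ T, ∑ k ∈ T.erase i, a k ^2 * Real.log ((a i ^2 + a k ^2)/(a k ^2))
      = ∑ i ∈ T, ∑ k ∈ T.erase i, a i ^2 * Real.log ((a i ^2 + a k ^2)/(a i ^2)) := by
    rw [Finset.sum_comm' hmem]
    apply Finset.sum_congr rfl
    intro k _
    apply Finset.sum_congr rfl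
    intro i _
    rw [add_comm]
  have twice : ∀ i ∈ T, ∀ k ∈ T.erase i,
      a i ^2 * Real.log ((a i ^2 + a k ^2)/(a i ^2))
        + a k ^2 * Real.log ((a i ^2 + a k ^2)/(a k ^2))
      ≤ 2*(Real.log 2 * (a i * a k)) := by
    intro i hi k hk
    have hk' : k ∈ T := Finset.mem_of_mem_erase hk
    have hpi := hppos i hi
    have hpk := hppos k hk'
    have hpair := pair_ineq hpi hpk
    rw [sqrt_term (ha i) (ha k)] at hpair
    linarith
  have main2 : (∑ i ∈ T, ∑ k ∈ T.erase i, a i ^2 * Real.log ((a i ^2 + a k ^2)/(a i ^2)))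
      ≤ ∑ i ∈ T, ∑ k ∈ T.erase i, Real.log 2 * (a i * a k) := by
    have hsum2 : ∑ i ∈ T, ∑ k ∈ T.erase i,
        (a i ^2 * Real.log ((a i ^2 + a k ^2)/(a i ^2))
          + a k ^2 * Real.log ((a i ^2 + a k ^2)/(a k ^2)))
        ≤ ∑ i ∈ T, ∑ k ∈ T.erase i, 2*(Real.log 2 * (a i * a k)) :=
      Finset.sum_le_sum fun i hi => Finset.sum_le_sum fun k hk => twice i hi k hk
    have e1 : ∑ i ∈ T, ∑ k ∈ T.erase i,
        (a i ^2 * Real.log ((a i ^2 + a k ^2)/(a i ^2))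
          + a k ^2 * Real.log ((a i ^2 + a k ^2)/(a k ^2)))
        = (∑ i ∈ T, ∑ k ∈ T.erase i, a i ^2 * Real.log ((a i ^2 + a k ^2)/(a i ^2)))
          + ∑ i ∈ T, ∑ k ∈ T.erase i, a k ^2 * Real.log ((a i ^2 + a k ^2)/(a k ^2)) := by
      rw [← Finset.sum_add_distrib]
      apply Finset.sum_congr rfl
      intro i _
      rw [← Finset.sum_add_distrib]
    have e2 : ∑ i ∈ T, ∑ k ∈ T.erase i, 2*(Real.log 2 * (a i * a k))
        = 2 * ∑ i ∈ T, ∑ k ∈ T.erase i, Real.log 2 * (a i * a k) := by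
      rw [Finset.mul_sum]
      apply Finset.sum_congr rfl
      intro i _
      rw [Finset.mul_sum]
    rw [e1, hswap, e2] at hsum2
    linarith
  have main3 : ∑ i ∈ T, ∑ k ∈ T.erase i, Real.log 2 * (a i * a k)
      ≤ Real.log 2 * ((∑ i, a i)^2 - 1) := by
    have hnn : ∀ i k : Fin d, 0 ≤ Real.log 2 * (a i * a k) := fun i k =>
      mul_nonneg (Real.log_nonneg one_le_two) (mul_nonneg (ha i) (ha k))
    have hsub1 : ∑ i ∈ T, ∑ k ∈ T.erase i, Real.log 2 * (a i * a k)
        ≤ ∑ i ∈ T, ∑ k ∈ Finset.univ.erase i, Real.log 2 * (a i * a k) :=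
      Finset.sum_le_sum fun i _ =>
        Finset.sum_le_sum_of_subset_of_nonneg
          (Finset.erase_subset_erase _ (Finset.filter_subset _ _))
          (fun k _ _ => hnn i k)
    have hsub2 : ∑ i ∈ T, ∑ k ∈ Finset.univ.erase i, Real.log 2 * (a i * a k)
        ≤ ∑ i, ∑ k ∈ Finset.univ.erase i, Real.log 2 * (a i * a k) :=
      Finset.sum_le_sum_of_subset_of_nonneg (Finset.filter_subset _ _)
        (fun i _ _ => Finset.sum_nonneg fun k _ => hnn i k)
    have calcuniv : ∑ i, ∑ k ∈ Finset.univ.erase i, Real.log 2 * (a i * a k)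
        = Real.log 2 * ((∑ i, a i)^2 - 1) := by
      have inner : ∀ i : Fin d, ∑ k ∈ Finset.univ.erase i, Real.log 2 * (a i * a k)
          = Real.log 2 * (a i * ((∑ k, a k) - a i)) := by
        intro i
        rw [show ∀ S : Finset (Fin d), ∑ k ∈ S, Real.log 2 * (a i * a k)
            = Real.log 2 * (a i * ∑ k ∈ S, a k) from fun S => by
          rw [Finset.mul_sum, Finset.mul_sum]]
        rw [Finset.sum_erase_eq_sub (Finset.mem_univ i)]
      rw [Finset.sum_congr rfl (fun i _ => inner i), ← Finset.mul_sum]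
      congr 1
      have expand : ∑ i, a i * ((∑ k, a k) - a i)
          = (∑ i, a i) * (∑ k, a k) - ∑ i, a i ^2 := by
        rw [show ∑ i, a i * ((∑ k, a k) - a i)
            = ∑ i, (a i * (∑ k, a k) - a i ^2) from
          Finset.sum_congr rfl fun i _ => by ring]
        rw [Finset.sum_sub_distrib, ← Finset.sum_mul]
      rw [expand, hs]
      ring
    exact le_trans hsub1 (le_trans hsub2 (le_of_eq calcuniv))
  rw [hrestrict]
  exact le_trans main1 (le_trans main2 main3)


lemma entropy_le_log {d : ℕ} (a : Fin d → ℝ) (ha : ∀ i, 0 ≤ a i)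
    (hs : ∑ i, a i ^ 2 = 1) :
    ∑ i, -(a i ^ 2 * Real.log (a i ^ 2)) ≤ 2 * Real.log (∑ i, a i) := by
  classical
  set T : Finset (Fin d) := Finset.univ.filter (fun i => a i ≠ 0) with hT
  have hmemT : ∀ i, i ∈ T ↔ a i ≠ 0 := by
    intro i
    simp [hT]
  have hrestrict : ∑ i, -(a i ^2 * Real.log (a i ^2))
      = ∑ i ∈ T, -(a i ^2 * Real.log (a i ^2)) := by
    symm
    apply Finset.sum_subset (Finset.filter_subset _ _)
    intro i _ hi
    have : a i = 0 := by
      by_contra hne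
      exact hi ((hmemT i).2 hne)
    simp [this]
  have hTsum : ∑ i ∈ T, a i ^2 = 1 := by
    rw [← hs]
    apply Finset.sum_subset (Finset.filter_subset _ _)
    intro i _ hi
    have : a i = 0 := by
      by_contra hne
      exact hi ((hmemT i).2 hne)
    simp [this]
  have hapos : ∀ i ∈ T, 0 < a i := fun i hi =>
    lt_of_le_of_ne (ha i) (Ne.symm ((hmemT i).1 hi))
  have amgm := Real.geom_mean_le_arith_mean_weighted T (fun i => a i ^2)
    (fun i => (a i)⁻¹) (fun i _ => sq_nonneg _) hTsum
    (fun i hi => inv_nonneg.2 (ha i))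
  have hsum_eq : ∑ i ∈ T, a i ^2 * (a i)⁻¹ = ∑ i ∈ T, a i := by
    apply Finset.sum_congr rfl
    intro i hi
    have := (hapos i hi).ne'
    field_simp
  have hsle : ∑ i ∈ T, a i ≤ ∑ i, a i :=
    Finset.sum_le_sum_of_subset_of_nonneg (Finset.filter_subset _ _)
      (fun i _ _ => ha i)
  have hprodpos : 0 < ∏ i ∈ T, ((a i)⁻¹) ^ (a i ^2 : ℝ) :=
    Finset.prod_pos fun i hi => Real.rpow_pos_of_pos (inv_pos.2 (hapos i hi)) _
  have hle : ∏ i ∈ T, ((a i)⁻¹) ^ (a i ^2 : ℝ) ≤ ∑ i, a i := by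
    calc ∏ i ∈ T, ((a i)⁻¹) ^ (a i ^2 : ℝ) ≤ ∑ i ∈ T, a i ^2 * (a i)⁻¹ := amgm
      _ = ∑ i ∈ T, a i := hsum_eq
      _ ≤ ∑ i, a i := hsle
  have hlog := Real.log_le_log hprodpos hle
  rw [Real.log_prod (fun i hi => (Real.rpow_pos_of_pos (inv_pos.2 (hapos i hi)) _).ne')] at hlog
  have hterm : ∀ i ∈ T, Real.log ((a i)⁻¹ ^ (a i ^2 : ℝ)) = a i ^2 * Real.log (a i)⁻¹ :=
    fun i hi => Real.log_rpow (inv_pos.2 (hapos i hi)) _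
  rw [Finset.sum_congr rfl hterm] at hlog
  -- now: ∑ i ∈ T, a i ^2 * log (a i)⁻¹ ≤ log (∑ i, a i)
  rw [hrestrict]
  have e : ∀ i ∈ T, -(a i ^2 * Real.log (a i ^2)) = 2 * (a i ^2 * Real.log (a i)⁻¹) := by
    intro i hi
    rw [Real.log_inv, show a i ^2 = a i ^(2:ℕ) from rfl, Real.log_pow]
    push_cast
    ring
  rw [Finset.sum_congr rfl e, ← Finset.mul_sum]
  linarith


open Matrix in
lemma col_norm {d : ℕ} (U : Matrix (Fin d) (Fin d) ℂ) (hU : Uᴴ * U = 1) (j : Fin d) :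
    ∑ i, ‖U i j‖ ^ 2 = 1 := by
  have h11 : (Uᴴ * U) j j = 1 := by
    rw [hU]
    simp [Matrix.one_apply]
  rw [Matrix.mul_apply] at h11
  have h12 : ∀ k, Uᴴ j k * U k j = ((‖U k j‖ ^ 2 : ℝ) : ℂ) := by
    intro k
    rw [Matrix.conjTranspose_apply, mul_comm]
    simp [Complex.mul_conj, Complex.normSq_eq_norm_sq]
  rw [Finset.sum_congr rfl (fun k _ => h12 k)] at h11
  exact_mod_cast h11

open Matrix in
theorem main_result
    (d : ℕ) (hd : 1 ≤ d) (U : Matrix (Fin d) (Fin d) ℂ)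
    (hU : Uᴴ * U = 1 ∧ U * Uᴴ = 1) (c1 cr : ℝ)
    (hc1 : IsGreatest
      {x : ℝ | ∃ j : Fin d, x = (∑ i, ‖U i j‖) ^ 2 - 1} c1)
    (hcr : IsGreatest
      {x : ℝ | ∃ j : Fin d,
        x = ∑ i, -(‖U i j‖ ^ 2 * Real.logb 2 (‖U i j‖ ^ 2))} cr) :
    cr ≤ c1 ∧ (2 : ℝ) ^ cr - 1 ≤ c1 := by
  obtain ⟨j, hj⟩ := hcr.1
  set a : Fin d → ℝ := fun i => ‖U i j‖ with haDef
  have ha : ∀ i, 0 ≤ a i := fun i => norm_nonneg _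
  have hsum : ∑ i, a i ^ 2 = 1 := col_norm U hU.1 j
  have hc1j : (∑ i, a i) ^ 2 - 1 ≤ c1 := hc1.2 ⟨j, rfl⟩
  have hl2 : (0:ℝ) < Real.log 2 := Real.log_pos one_lt_two
  have hcrlog : cr * Real.log 2 = ∑ i, -(a i ^ 2 * Real.log (a i ^ 2)) := by
    rw [hj, Finset.sum_mul]
    apply Finset.sum_congr rfl
    intro i _
    rw [Real.logb]
    field_simp
    rfl
  have hle1 : ∑ i, a i ^ 2 ≤ ∑ i, a i := by
    apply Finset.sum_le_sum
    intro i _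
    have h1 : a i ^ 2 ≤ 1 := by
      rw [← hsum]
      exact Finset.single_le_sum (f := fun i => a i ^ 2) (fun i _ => sq_nonneg _)
        (Finset.mem_univ i)
    nlinarith [ha i]
  have hs1 : (1:ℝ) ≤ ∑ i, a i := hsum ▸ hle1
  constructor
  · have h2 := entropy_le_l1 a ha hsum
    rw [← hcrlog] at h2
    have := (mul_le_mul_iff_of_pos_right hl2).1 (by linarith : cr * Real.log 2
      ≤ ((∑ i, a i)^2 - 1) * Real.log 2)
    linarith
  · have h3 := entropy_le_log a ha hsum
    rw [← hcrlog] at h3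
    have hspos : (0:ℝ) < ∑ i, a i := by linarith
    have hexp : (2:ℝ) ^ cr ≤ (∑ i, a i)^2 := by
      rw [Real.rpow_def_of_pos (by norm_num : (0:ℝ) < 2)]
      calc Real.exp (Real.log 2 * cr) ≤ Real.exp (Real.log ((∑ i, a i)^2)) := by
            apply Real.exp_le_exp.2
            rw [Real.log_pow]
            push_cast
            linarith [h3, mul_comm cr (Real.log 2)]
        _ = (∑ i, a i)^2 := Real.exp_log (by positivity)
    linarith

end CohAux


theorem l1_cohering_power_ge_relent_cohering_power
    (d : ℕ) (hd : 1 ≤ d) (U : Matrix (Fin d) (Fin d) ℂ)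
    (hU : Uᴴ * U = 1 ∧ U * Uᴴ = 1) (c1 cr : ℝ)
    (hc1 : IsGreatest
      {x : ℝ | ∃ j : Fin d, x = (∑ i, ‖U i j‖) ^ 2 - 1} c1)
    (hcr : IsGreatest
      {x : ℝ | ∃ j : Fin d,
        x = ∑ i, -(‖U i j‖ ^ 2 * Real.logb 2 (‖U i j‖ ^ 2))} cr) :
    cr ≤ c1 ∧ (2 : ℝ) ^ cr - 1 ≤ c1 :=
  CohAux.main_result d hd U hU c1 cr hc1 hcr
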